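/- Let θ, θ* ∈ ℝ^{N×m} with columns θ_j, θ_j*, Y ∈ ℝ^{N×m} with columns y_j, f_j : ℝ^N → ℝ convex continuously differentiable, Γ symmetric positive definite, and f_j(θ_j*) ≤ 0 for all j. Then Tr[(θ - θ*)ᵀ Γ⁻¹ (Proj_Γ(θ, Y, F) - ΓY)] ≤ 0, where Proj_Γ is applied columnwise. -/

import Mathlib

open RealInnerProductSpace

/-- Gradient inequality for convex differentiable functions. -/
lemma grad_ineq_aux {E : Type*} [NormedAddCommGroup E] [InnerProductSpace ℝ E]
    [CompleteSpace E] {f : E → ℝ} (hf : ConvexOn ℝ Set.univ f)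
    (hd : Differentiable ℝ f) (x y : E) :
    ⟪gradient f x, y - x⟫ ≤ f y - f x := by
  set v := y - x with hv
  have hline : HasDerivAt (fun t : ℝ => x + t • v) v 0 := by
    simpa using ((hasDerivAt_id (0 : ℝ)).smul_const v).const_add x
  have hg : HasGradientAt f (gradient f x) x := (hd x).hasGradientAt
  have hfd := hg.hasFDerivAt
  have hcomp : HasDerivAt (fun t : ℝ => f (x + t • v)) ⟪gradient f x, v⟫ 0 := by
    have h := HasFDerivAt.comp_hasDerivAt 0 (by simpa using hfd) hline
    simpa [Function.comp_def] using h
  have hconv : ConvexOn ℝ Set.univ (fun t : ℝ => f (x + t • v)) := by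
    have h := hf.comp_affineMap (AffineMap.lineMap x y)
    simp only [Set.preimage_univ] at h
    have hfun : (fun t : ℝ => f (x + t • v)) = f ∘ AffineMap.lineMap x y := by
      funext t
      simp [AffineMap.lineMap_apply, add_comm, hv]
    rw [hfun]
    exact h
  have hs := hconv.le_slope_of_hasDerivAt (Set.mem_univ (0 : ℝ)) (Set.mem_univ (1 : ℝ))
    zero_lt_one hcomp
  rw [slope_def_field] at hs
  have hxy : x + v = y := by simp [hv]
  rw [← hxy]
  simpa using hs

open scoped Classical in
/-- Lemma 4: columnwise Γ-projection correction has nonpositive trace inner product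
with the parameter error. -/
theorem proj_correction_trace_nonpos {N m : ℕ}
    (f : Fin m → (EuclideanSpace ℝ (Fin N) → ℝ))
    (hf : ∀ j, ConvexOn ℝ Set.univ (f j)) (hf1 : ∀ j, ContDiff ℝ 1 (f j))
    (Γ : Matrix (Fin N) (Fin N) ℝ) (hΓsym : Γ.IsSymm) (hΓpd : Γ.PosDef)
    (θ θs Y : Fin m → EuclideanSpace ℝ (Fin N))
    (hθs : ∀ j, f j (θs j) ≤ 0) :
    let G := Matrix.toEuclideanLin Γ
    let g := fun j => gradient (f j) (θ j)
    let Proj := fun j =>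
      if 0 < f j (θ j) ∧ 0 < ⟪Y j, G (g j)⟫ then
        G (Y j) - (f j (θ j) * ⟪g j, G (Y j)⟫ / ⟪g j, G (g j)⟫) • G (g j)
      else G (Y j)
    ∑ j, ⟪θ j - θs j, Matrix.toEuclideanLin Γ⁻¹ (Proj j - G (Y j))⟫ ≤ 0 := by
  intro G g Proj
  have hdet : IsUnit Γ.det := isUnit_iff_ne_zero.mpr hΓpd.det_pos.ne'
  have hinv : ∀ z : EuclideanSpace ℝ (Fin N),
      Matrix.toEuclideanLin Γ⁻¹ (G z) = z := by
    intro z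
    have h1 : Γ⁻¹ * Γ = 1 := Matrix.nonsing_inv_mul Γ hdet
    have : Matrix.toEuclideanLin Γ⁻¹ (G z) = Matrix.toEuclideanLin (Γ⁻¹ * Γ) z := by
      simp [G, Matrix.toEuclideanLin_apply, Matrix.mulVec_mulVec]
    rw [this, h1]
    simp [Matrix.toEuclideanLin_apply]
  have hsym : (Matrix.toEuclideanLin Γ).IsSymmetric :=
    Matrix.isHermitian_iff_isSymmetric.mp hΓpd.1
  have hpos : ∀ x : EuclideanSpace ℝ (Fin N), x ≠ 0 → 0 < ⟪x, G x⟫ := by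
    intro x hx
    have h := hΓpd.dotProduct_mulVec_pos (x := WithLp.ofLp x) (by simpa using hx)
    simpa [G, PiLp.inner_apply, Matrix.toEuclideanLin_apply, dotProduct, mul_comm] using h
  apply Finset.sum_nonpos
  intro j _
  by_cases hc : 0 < f j (θ j) ∧ 0 < ⟪Y j, G (g j)⟫
  · simp only [Proj, if_pos hc]
    set c := f j (θ j) * ⟪g j, G (Y j)⟫ / ⟪g j, G (g j)⟫ with hcdef
    have hsub : G (Y j) - c • G (g j) - G (Y j) = -(c • G (g j)) := by abel
    rw [hsub, map_neg, map_smul, hinv]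
    have hgne : g j ≠ 0 := by
      intro h0
      rw [h0] at hc
      simp at hc
    have hGgpos : 0 < ⟪g j, G (g j)⟫ := hpos _ hgne
    have hswap : ⟪g j, G (Y j)⟫ = ⟪Y j, G (g j)⟫ := by
      rw [← hsym (g j) (Y j), real_inner_comm]
    have hcpos : 0 ≤ c := by
      rw [hcdef, hswap]
      have := hc.1
      have := hc.2
      have := hGgpos
      positivity
    have hgrad : 0 ≤ ⟪θ j - θs j, g j⟫ := by
      have h := grad_ineq_aux (hf j) ((hf1 j).differentiable one_ne_zero) (θ j) (θs j)
      have h2 : ⟪g j, θs j - θ j⟫ ≤ f j (θs j) - f j (θ j) := h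
      have h3 : f j (θs j) - f j (θ j) ≤ 0 := by
        have := hθs j
        linarith [hc.1]
      rw [real_inner_comm]
      have : ⟪g j, θ j - θs j⟫ = -⟪g j, θs j - θ j⟫ := by
        rw [← inner_neg_right]
        congr 1
        abel
      rw [this]
      linarith
    rw [inner_neg_right, real_inner_smul_right]
    have : 0 ≤ c * ⟪θ j - θs j, g j⟫ := mul_nonneg hcpos hgrad
    linarith
  · simp only [Proj, if_neg hc, sub_self, map_zero, inner_zero_right, le_refl]
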